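/- arXiv:2104.03052 — 4 statements merged into one kernel-verified Lean document; each statement's English description precedes it below -/
import Mathlib

section
/- Let L be a ★-compact abstract bi-intuitionistic logic extending BIL, and suppose L is not expressively equivalent to BIL. Then there exist a signature Θ_φ, a formula φ ∈ L(Θ_φ), and pointed Θ_φ-models (M₁,w₁) and (M₂,w₂) such that Th⁺_BIL(M₁,w₁) ⊆ Th⁺_BIL(M₂,w₂), while M₁,w₁ ⊨_L φ and M₂,w₂ ⊭_L φ. -/
/-! Common vocabulary for bi-intuitionistic propositional logic (BIL),
Kripke models, bi-asimulations, abstract bi-intuitionistic logics and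
bi-unravellings, following Olkhovikov & Badia,
"Maximality of bi-intuitionistic propositional logic". -/

/-- Formulas of bi-intuitionistic propositional logic over the type `A` of
propositional letters. -/
inductive BILForm (A : Type) : Type
  | bot : BILForm A
  | atom : A → BILForm A
  | conj : BILForm A → BILForm A → BILForm A
  | disj : BILForm A → BILForm A → BILForm A
  | impl : BILForm A → BILForm A → BILForm A
  | coimpl : BILForm A → BILForm A → BILForm A

namespace BILForm

/-- The propositional letters occurring in a formula; a formula belongs to
`BIL(Θ)` iff its letters are contained in `Θ`. -/
def letters {A : Type} : BILForm A → Set A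
  | bot => ∅
  | atom p => {p}
  | conj φ ψ => letters φ ∪ letters ψ
  | disj φ ψ => letters φ ∪ letters ψ
  | impl φ ψ => letters φ ∪ letters ψ
  | coimpl φ ψ => letters φ ∪ letters ψ

end BILForm

/-- A (bi-intuitionistic) Kripke model with propositional letters `A`,
carried on the subset `dom` of the type `Ω`: a nonempty set of worlds,
partially ordered by `rel`, together with a monotone valuation. -/
structure SKModel (A : Type) (Ω : Type) : Type where
  dom : Set Ω
  nonempty : dom.Nonempty
  rel : Ω → Ω → Prop
  rel_mem : ∀ {u v}, rel u v → u ∈ dom ∧ v ∈ dom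
  rel_refl : ∀ u ∈ dom, rel u u
  rel_trans : ∀ {u v w}, rel u v → rel v w → rel u w
  rel_antisymm : ∀ {u v}, rel u v → rel v u → u = v
  val : A → Set Ω
  val_mem : ∀ p, val p ⊆ dom
  val_mono : ∀ (p : A) {u v}, rel u v → u ∈ val p → v ∈ val p

/-- Kripke satisfaction for bi-intuitionistic formulas. -/
def BILSat {A Ω : Type} (M : SKModel A Ω) : BILForm A → Ω → Prop
  | .bot, _ => False
  | .atom p, w => w ∈ M.val p
  | .conj φ ψ, w => BILSat M φ w ∧ BILSat M ψ w
  | .disj φ ψ, w => BILSat M φ w ∨ BILSat M ψ w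
  | .impl φ ψ, w => ∀ v, M.rel w v → BILSat M φ v → BILSat M ψ v
  | .coimpl φ ψ, w => ∃ v, M.rel v w ∧ BILSat M φ v ∧ ¬ BILSat M ψ v

/-- `(Γ, Δ)` is satisfied at `(M, w)`: all of `Γ` true, all of `Δ` false. -/
def BILSatTh {A Ω : Type} (M : SKModel A Ω) (w : Ω) (Γ Δ : Set (BILForm A)) : Prop :=
  (∀ φ ∈ Γ, BILSat M φ w) ∧ (∀ φ ∈ Δ, ¬ BILSat M φ w)

/-- `Th⁺_BIL(M₁,w₁) ⊆ Th⁺_BIL(M₂,w₂)` over the signature `Θ`. -/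
def BILThPosSubset {A Ω₁ Ω₂ : Type} (Θ : Set A) (M₁ : SKModel A Ω₁) (w₁ : Ω₁)
    (M₂ : SKModel A Ω₂) (w₂ : Ω₂) : Prop :=
  ∀ φ : BILForm A, φ.letters ⊆ Θ → BILSat M₁ φ w₁ → BILSat M₂ φ w₂

/-- `Th_BIL(M₁,w₁) = Th_BIL(M₂,w₂)` over the signature `Θ`. -/
def BILThEq {A Ω₁ Ω₂ : Type} (Θ : Set A) (M₁ : SKModel A Ω₁) (w₁ : Ω₁)
    (M₂ : SKModel A Ω₂) (w₂ : Ω₂) : Prop :=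
  ∀ φ : BILForm A, φ.letters ⊆ Θ → (BILSat M₁ φ w₁ ↔ BILSat M₂ φ w₂)

/-- A bi-asimulation (over the signature `Θ`) from `(M₁,w₁)` to `(M₂,w₂)`,
given by its two components `R ⊆ W₁ × W₂` and `S ⊆ W₂ × W₁`. -/
structure IsBiAsim {A Ω₁ Ω₂ : Type} (Θ : Set A) (M₁ : SKModel A Ω₁) (M₂ : SKModel A Ω₂)
    (w₁ : Ω₁) (w₂ : Ω₂) (R : Ω₁ → Ω₂ → Prop) (S : Ω₂ → Ω₁ → Prop) : Prop where
  memR : ∀ {v s}, R v s → v ∈ M₁.dom ∧ s ∈ M₂.dom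
  memS : ∀ {v s}, S v s → v ∈ M₂.dom ∧ s ∈ M₁.dom
  elem : R w₁ w₂
  atomR : ∀ p ∈ Θ, ∀ {v s}, R v s → v ∈ M₁.val p → s ∈ M₂.val p
  atomS : ∀ p ∈ Θ, ∀ {v s}, S v s → v ∈ M₂.val p → s ∈ M₁.val p
  backR : ∀ {v s t}, R v s → M₂.rel s t → ∃ u, M₁.rel v u ∧ S t u ∧ R u t
  backS : ∀ {v s t}, S v s → M₁.rel s t → ∃ u, M₂.rel v u ∧ R t u ∧ S u t
  forthR : ∀ {v s u}, R v s → M₁.rel u v → ∃ t, M₂.rel t s ∧ S t u ∧ R u t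
  forthS : ∀ {v s u}, S v s → M₂.rel u v → ∃ t, M₁.rel t s ∧ R t u ∧ S u t

/-- `M` is a submodel of `N`. -/
def Submodel {A Ω : Type} (M N : SKModel A Ω) : Prop :=
  M.dom ⊆ N.dom ∧ (∀ u ∈ M.dom, ∀ v ∈ M.dom, (M.rel u v ↔ N.rel u v)) ∧
    ∀ p, M.val p = N.val p ∩ M.dom

/-- `U` is the union of the countable chain `Mc` of models. -/
def IsUnionOfChain {A Ω : Type} (Mc : ℕ → SKModel A Ω) (U : SKModel A Ω) : Prop :=
  U.dom = ⋃ n, (Mc n).dom ∧ (∀ u v, U.rel u v ↔ ∃ n, (Mc n).rel u v) ∧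
    ∀ p, U.val p = ⋃ n, (Mc n).val p

/-- `N'` has the same frame as `N` and the same valuation on the letters in
`Θ` (this expresses both `Σ`-expansions and `Σ`-reducts). -/
def IsExpansion {A Ω : Type} (Θ : Set A) (N N' : SKModel A Ω) : Prop :=
  N'.dom = N.dom ∧ (∀ u v, N'.rel u v ↔ N.rel u v) ∧ ∀ p ∈ Θ, N'.val p = N.val p

/-- `M ≼_BIL N` over the signature `Θ`. -/
def BILElemSub {A Ω : Type} (Θ : Set A) (M N : SKModel A Ω) : Prop :=
  Submodel M N ∧ ∀ w ∈ M.dom, ∀ φ : BILForm A, φ.letters ⊆ Θ →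
    (BILSat M φ w ↔ BILSat N φ w)

/-- `(Γ,Δ)` is a successor BIL-type of `(M,v)` (over the signature `Θ`). -/
def BILSuccType {A Ω : Type} (Θ : Set A) (M : SKModel A Ω) (v : Ω)
    (Γ Δ : Set (BILForm A)) : Prop :=
  (∀ φ ∈ Γ, BILForm.letters φ ⊆ Θ) ∧ (∀ φ ∈ Δ, BILForm.letters φ ⊆ Θ) ∧
    ∀ Γ' ⊆ Γ, ∀ Δ' ⊆ Δ, Γ'.Finite → Δ'.Finite →
      ∃ u, M.rel v u ∧ BILSatTh M u Γ' Δ'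

/-- `(Γ,Δ)` is a predecessor BIL-type of `(M,v)` (over the signature `Θ`). -/
def BILPredType {A Ω : Type} (Θ : Set A) (M : SKModel A Ω) (v : Ω)
    (Γ Δ : Set (BILForm A)) : Prop :=
  (∀ φ ∈ Γ, BILForm.letters φ ⊆ Θ) ∧ (∀ φ ∈ Δ, BILForm.letters φ ⊆ Θ) ∧
    ∀ Γ' ⊆ Γ, ∀ Δ' ⊆ Δ, Γ'.Finite → Δ'.Finite →
      ∃ u, M.rel u v ∧ BILSatTh M u Γ' Δ'

/-- `M` is BIL-saturated (over the signature `Θ`): it realizes all of its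
successor and predecessor BIL-types. -/
def BILSaturated {A Ω : Type} (Θ : Set A) (M : SKModel A Ω) : Prop :=
  ∀ v ∈ M.dom, ∀ Γ Δ : Set (BILForm A),
    (BILSuccType Θ M v Γ Δ → ∃ u, M.rel v u ∧ BILSatTh M u Γ Δ) ∧
    (BILPredType Θ M v Γ Δ → ∃ u, M.rel u v ∧ BILSatTh M u Γ Δ)

/-- An isomorphism `g` of Kripke `Θ`-models from `M` onto `N`. -/
def BILIso {A Ω₁ Ω₂ : Type} (Θ : Set A) (M : SKModel A Ω₁) (N : SKModel A Ω₂)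
    (g : Ω₁ → Ω₂) : Prop :=
  Set.InjOn g M.dom ∧ g '' M.dom = N.dom ∧
  (∀ u ∈ M.dom, ∀ v ∈ M.dom, (M.rel u v ↔ N.rel (g u) (g v))) ∧
  (∀ p ∈ Θ, ∀ u ∈ M.dom, (u ∈ M.val p ↔ g u ∈ N.val p))

/-- An abstract bi-intuitionistic logic over the propositional letters `A`:
a set `In Θ` of `Θ`-formulas for every signature `Θ ⊆ A`, and a satisfaction
relation enjoying the Isomorphism, Expansion, Occurrence and Closure
properties. -/
structure AbsLogic (A : Type) : Type 1 where
  F : Type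
  In : Set A → Set F
  Sat : ∀ {Ω : Type}, SKModel A Ω → Ω → F → Prop
  in_mono : ∀ {Θ Θ' : Set A}, Θ ⊆ Θ' → In Θ ⊆ In Θ'
  iso_invariant : ∀ (Θ : Set A) {Ω₁ Ω₂ : Type} (M : SKModel A Ω₁) (N : SKModel A Ω₂)
      (g : Ω₁ → Ω₂), BILIso Θ M N g →
      ∀ φ ∈ In Θ, ∀ w ∈ M.dom, (Sat M w φ ↔ Sat N (g w) φ)
  expansion : ∀ (Θ : Set A) {Ω : Type} (M M' : SKModel A Ω), M.dom = M'.dom →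
      (∀ u v, M.rel u v ↔ M'.rel u v) → (∀ p ∈ Θ, M.val p = M'.val p) →
      ∀ φ ∈ In Θ, ∀ w, (Sat M w φ ↔ Sat M' w φ)
  occurrence : ∀ (Θ : Set A) (φ : F), φ ∈ In Θ →
      ∃ Θ₀ : Set A, Θ₀.Finite ∧ Θ₀ ⊆ Θ ∧ φ ∈ In Θ₀
  fbot : F
  fconj : F → F → F
  fdisj : F → F → F
  fimpl : F → F → F
  fcoimpl : F → F → F
  mem_bot : ∀ Θ, fbot ∈ In Θ
  mem_conj : ∀ {Θ φ ψ}, φ ∈ In Θ → ψ ∈ In Θ → fconj φ ψ ∈ In Θ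
  mem_disj : ∀ {Θ φ ψ}, φ ∈ In Θ → ψ ∈ In Θ → fdisj φ ψ ∈ In Θ
  mem_impl : ∀ {Θ φ ψ}, φ ∈ In Θ → ψ ∈ In Θ → fimpl φ ψ ∈ In Θ
  mem_coimpl : ∀ {Θ φ ψ}, φ ∈ In Θ → ψ ∈ In Θ → fcoimpl φ ψ ∈ In Θ
  sat_bot : ∀ {Ω : Type} (M : SKModel A Ω) (w : Ω), ¬ Sat M w fbot
  sat_conj : ∀ {Ω : Type} (M : SKModel A Ω) (w : Ω) (φ ψ : F),
      Sat M w (fconj φ ψ) ↔ (Sat M w φ ∧ Sat M w ψ)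
  sat_disj : ∀ {Ω : Type} (M : SKModel A Ω) (w : Ω) (φ ψ : F),
      Sat M w (fdisj φ ψ) ↔ (Sat M w φ ∨ Sat M w ψ)
  sat_impl : ∀ {Ω : Type} (M : SKModel A Ω) (w : Ω) (φ ψ : F),
      Sat M w (fimpl φ ψ) ↔ ∀ v, M.rel w v → Sat M v φ → Sat M v ψ
  sat_coimpl : ∀ {Ω : Type} (M : SKModel A Ω) (w : Ω) (φ ψ : F),
      Sat M w (fcoimpl φ ψ) ↔ ∃ v, M.rel v w ∧ Sat M v φ ∧ ¬ Sat M v ψ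

namespace AbsLogic

variable {A : Type}

/-- The `L`-theory `(Γ,Δ)` is satisfied at `(M,w)`. -/
def SatTh (L : AbsLogic A) {Ω : Type} (M : SKModel A Ω) (w : Ω) (Γ Δ : Set L.F) : Prop :=
  (∀ φ ∈ Γ, L.Sat M w φ) ∧ (∀ φ ∈ Δ, ¬ L.Sat M w φ)

/-- `Th⁺_L(M₁,w₁) ⊆ Th⁺_L(M₂,w₂)` over the signature `Θ`. -/
def ThPosSubset (L : AbsLogic A) (Θ : Set A) {Ω₁ Ω₂ : Type} (M₁ : SKModel A Ω₁) (w₁ : Ω₁)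
    (M₂ : SKModel A Ω₂) (w₂ : Ω₂) : Prop :=
  ∀ φ ∈ L.In Θ, L.Sat M₁ w₁ φ → L.Sat M₂ w₂ φ

/-- `Th_L(M₁,w₁) = Th_L(M₂,w₂)` over the signature `Θ`. -/
def ThEq (L : AbsLogic A) (Θ : Set A) {Ω₁ Ω₂ : Type} (M₁ : SKModel A Ω₁) (w₁ : Ω₁)
    (M₂ : SKModel A Ω₂) (w₂ : Ω₂) : Prop :=
  ∀ φ ∈ L.In Θ, (L.Sat M₁ w₁ φ ↔ L.Sat M₂ w₂ φ)

/-- `L` is preserved under bi-asimulations. -/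
def Preserved (L : AbsLogic A) : Prop :=
  ∀ (Θ : Set A) (Ω₁ Ω₂ : Type) (M₁ : SKModel A Ω₁) (M₂ : SKModel A Ω₂)
    (w₁ : Ω₁) (w₂ : Ω₂) (R : Ω₁ → Ω₂ → Prop) (S : Ω₂ → Ω₁ → Prop),
    IsBiAsim Θ M₁ M₂ w₁ w₂ R S → L.ThPosSubset Θ M₁ w₁ M₂ w₂

/-- `L` is ★-compact. -/
def StarCompact (L : AbsLogic A) : Prop :=
  ∀ (Θ : Set A) (Γ Δ : Set L.F), Γ ⊆ L.In Θ → Δ ⊆ L.In Θ →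
    (∀ Γ' ⊆ Γ, ∀ Δ' ⊆ Δ, Γ'.Finite → Δ'.Finite →
      ∃ (Ω : Type) (M : SKModel A Ω) (w : Ω), w ∈ M.dom ∧ L.SatTh M w Γ' Δ') →
    ∃ (Ω : Type) (M : SKModel A Ω) (w : Ω), w ∈ M.dom ∧ L.SatTh M w Γ Δ

/-- `M ≼_L N` over the signature `Θ`. -/
def ElemSub (L : AbsLogic A) (Θ : Set A) {Ω : Type} (M N : SKModel A Ω) : Prop :=
  Submodel M N ∧ ∀ w ∈ M.dom, ∀ φ ∈ L.In Θ, (L.Sat M w φ ↔ L.Sat N w φ)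

/-- `L` has the Tarski Union Property. -/
def HasTUP (L : AbsLogic A) : Prop :=
  ∀ (Θ : Set A) (Ω : Type) (Mc : ℕ → SKModel A Ω),
    (∀ n, L.ElemSub Θ (Mc n) (Mc (n + 1))) →
    ∀ U : SKModel A Ω, IsUnionOfChain Mc U → ∀ n, L.ElemSub Θ (Mc n) U

/-- `(Γ,Δ)` is a successor `L`-type of `(M,v)` (over the signature `Θ`). -/
def SuccType (L : AbsLogic A) (Θ : Set A) {Ω : Type} (M : SKModel A Ω) (v : Ω)
    (Γ Δ : Set L.F) : Prop :=
  Γ ⊆ L.In Θ ∧ Δ ⊆ L.In Θ ∧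
    ∀ Γ' ⊆ Γ, ∀ Δ' ⊆ Δ, Γ'.Finite → Δ'.Finite →
      ∃ u, M.rel v u ∧ L.SatTh M u Γ' Δ'

/-- `(Γ,Δ)` is a predecessor `L`-type of `(M,v)` (over the signature `Θ`). -/
def PredType (L : AbsLogic A) (Θ : Set A) {Ω : Type} (M : SKModel A Ω) (v : Ω)
    (Γ Δ : Set L.F) : Prop :=
  Γ ⊆ L.In Θ ∧ Δ ⊆ L.In Θ ∧
    ∀ Γ' ⊆ Γ, ∀ Δ' ⊆ Δ, Γ'.Finite → Δ'.Finite →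
      ∃ u, M.rel u v ∧ L.SatTh M u Γ' Δ'

/-- `M` is `L`-saturated (over the signature `Θ`). -/
def Saturated (L : AbsLogic A) (Θ : Set A) {Ω : Type} (M : SKModel A Ω) : Prop :=
  ∀ v ∈ M.dom, ∀ Γ Δ : Set L.F,
    (L.SuccType Θ M v Γ Δ → ∃ u, M.rel v u ∧ L.SatTh M u Γ Δ) ∧
    (L.PredType Θ M v Γ Δ → ∃ u, M.rel u v ∧ L.SatTh M u Γ Δ)

/-- An `L`-elementary embedding of `M` into `N` (over the signature `Θ`). -/
def ElemEmbedding (L : AbsLogic A) (Θ : Set A) {Ω₁ Ω₂ : Type}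
    (M : SKModel A Ω₁) (N : SKModel A Ω₂) (f : Ω₁ → Ω₂) : Prop :=
  Set.InjOn f M.dom ∧ Set.MapsTo f M.dom N.dom ∧
  (∀ u ∈ M.dom, ∀ v ∈ M.dom, (M.rel u v ↔ N.rel (f u) (f v))) ∧
  (∀ u ∈ M.dom, ∀ φ ∈ L.In Θ, (L.Sat M u φ ↔ L.Sat N (f u) φ))

end AbsLogic

/-- An abstract bi-intuitionistic logic extending `BIL`: bi-intuitionistic
formulas are present in it in their usual form and with their usual meaning. -/
structure BILExtension (A : Type) extends AbsLogic A where
  ofBIL : BILForm A → F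
  ofBIL_mem : ∀ (Θ : Set A) (φ : BILForm A), φ.letters ⊆ Θ → ofBIL φ ∈ In Θ
  ofBIL_bot : ofBIL .bot = fbot
  ofBIL_conj : ∀ φ ψ, ofBIL (.conj φ ψ) = fconj (ofBIL φ) (ofBIL ψ)
  ofBIL_disj : ∀ φ ψ, ofBIL (.disj φ ψ) = fdisj (ofBIL φ) (ofBIL ψ)
  ofBIL_impl : ∀ φ ψ, ofBIL (.impl φ ψ) = fimpl (ofBIL φ) (ofBIL ψ)
  ofBIL_coimpl : ∀ φ ψ, ofBIL (.coimpl φ ψ) = fcoimpl (ofBIL φ) (ofBIL ψ)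
  sat_ofBIL : ∀ {Ω : Type} (M : SKModel A Ω) (w : Ω) (φ : BILForm A),
      Sat M w (ofBIL φ) ↔ BILSat M φ w

/-! ### Bi-unravellings -/

/-- The universe `W^un_w` of the bi-unravelling of `M` around `w`: finite
nonempty sequences starting at `w` whose consecutive elements are
`≺`- or `≻`-related and distinct. -/
def unravDom {A Ω : Type} (M : SKModel A Ω) (w : Ω) : Set (List Ω) :=
  {l | l ≠ [] ∧ l.head? = some w ∧ (∀ x ∈ l, x ∈ M.dom) ∧
    l.Chain' (fun u v => (M.rel u v ∨ M.rel v u) ∧ u ≠ v)}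

/-- The one-step relation `ρ^un_w` of the bi-unravelling. -/
def unravStep {A Ω : Type} (M : SKModel A Ω) (w : Ω) (s t : List Ω) : Prop :=
  s ∈ unravDom M w ∧ t ∈ unravDom M w ∧
    ((∃ x y, s.getLast? = some y ∧ t = s ++ [x] ∧ M.rel y x) ∨
     (∃ x y, t.getLast? = some y ∧ s = t ++ [x] ∧ M.rel x y))

/-- The accessibility relation `≺^un_w` of the bi-unravelling: the reflexive
and transitive closure of `ρ^un_w`. -/
def unravRel {A Ω : Type} (M : SKModel A Ω) (w : Ω) : List Ω → List Ω → Prop :=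
  Relation.ReflTransGen (unravStep M w)

/-- The valuation `V^un_w` of the bi-unravelling: a sequence satisfies a
letter iff its last element does. -/
def unravVal {A Ω : Type} (M : SKModel A Ω) (w : Ω) (p : A) : Set (List Ω) :=
  {l | l ∈ unravDom M w ∧ ∃ y, l.getLast? = some y ∧ y ∈ M.val p}

/-- `U` is (a presentation of) the bi-unravelling `M^un_w` of `M` around `w`. -/
def IsUnravelling {A Ω : Type} (M : SKModel A Ω) (w : Ω) (U : SKModel A (List Ω)) : Prop :=
  U.dom = unravDom M w ∧
  (∀ α β, U.rel α β ↔ (α ∈ unravDom M w ∧ β ∈ unravDom M w ∧ unravRel M w α β)) ∧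
  (∀ p, U.val p = unravVal M w p)

/-- `M` is a bi-unravelled model presented in the canonical form: its frame is
literally the bi-unravelling frame of `M₀` around `w₀` (the valuation of `M`
is arbitrary). -/
def IsBiUnravelledForm {A Ω : Type} (M₀ : SKModel A Ω) (w₀ : Ω)
    (M : SKModel A (List Ω)) : Prop :=
  M.dom = unravDom M₀ w₀ ∧
  (∀ α β, M.rel α β ↔ (α ∈ unravDom M₀ w₀ ∧ β ∈ unravDom M₀ w₀ ∧ unravRel M₀ w₀ α β))

/-- `(N,v)` is a bi-unravelled pointed model: its underlying frame is
isomorphic, via a point-preserving order-respecting bijection, to the frame of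
some bi-unravelling. -/
def IsBiUnravelled {A Ω' : Type} (N : SKModel A Ω') (v : Ω') : Prop :=
  ∃ (Ω₀ : Type) (M₀ : SKModel A Ω₀) (w₀ : Ω₀), w₀ ∈ M₀.dom ∧
    ∃ g : Ω' → List Ω₀, Set.InjOn g N.dom ∧ g '' N.dom = unravDom M₀ w₀ ∧ g v = [w₀] ∧
      ∀ x ∈ N.dom, ∀ y ∈ N.dom, (N.rel x y ↔ unravRel M₀ w₀ (g x) (g y))

/-- `qp` and `qm` provide the fresh letters `q⁺_α`, `q⁻_α` (for `α ∈ D`)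
used to form the signature `Θ_M`. -/
def FreshLetters {A Ω : Type} (Θ : Set A) (D : Set Ω) (qp qm : Ω → A) : Prop :=
  Set.InjOn qp D ∧ Set.InjOn qm D ∧
  (∀ α ∈ D, qp α ∉ Θ) ∧ (∀ α ∈ D, qm α ∉ Θ) ∧
  (∀ α ∈ D, ∀ β ∈ D, qp α ≠ qm β)

/-- The signature `Θ_M = Θ ∪ {q⁺_α, q⁻_α : α ∈ D}`. -/
def bracketSig {A Ω : Type} (Θ : Set A) (D : Set Ω) (qp qm : Ω → A) : Set A :=
  Θ ∪ qp '' D ∪ qm '' D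

/-- `Mb` is the model `[M]`: same frame as `M`, same valuation on `Θ`, and
`β ∈ [V](q⁺_α) ↔ α ≺ β`, `β ∉ [V](q⁻_α) ↔ β ≺ α`. -/
def IsBracket {A Ω : Type} (Θ : Set A) (qp qm : Ω → A) (M Mb : SKModel A Ω) : Prop :=
  Mb.dom = M.dom ∧ (∀ u v, Mb.rel u v ↔ M.rel u v) ∧
  (∀ p ∈ Θ, Mb.val p = M.val p) ∧
  (∀ α ∈ M.dom, Mb.val (qp α) = {β | M.rel α β}) ∧
  (∀ α ∈ M.dom, Mb.val (qm α) = {β | β ∈ M.dom ∧ ¬ M.rel β α})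

/-! ### Formula schemas -/

/-- Binary formula schemas: expressions built from two placeholders and
propositional letters by `→` and `≪`. -/
inductive BILSchema (A : Type) : Type
  | v1 : BILSchema A
  | v2 : BILSchema A
  | atom : A → BILSchema A
  | impl : BILSchema A → BILSchema A → BILSchema A
  | coimpl : BILSchema A → BILSchema A → BILSchema A

namespace BILSchema

/-- The letters occurring in a schema. -/
def letters {A : Type} : BILSchema A → Set A
  | v1 => ∅
  | v2 => ∅
  | atom p => {p}
  | impl s t => letters s ∪ letters t
  | coimpl s t => letters s ∪ letters t

/-- Evaluation of a schema in an abstract logic `L` extending `BIL`, on a pair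
of `L`-formulas. -/
def eval {A : Type} (L : BILExtension A) : BILSchema A → L.F → L.F → L.F
  | v1, α, _ => α
  | v2, _, β => β
  | atom p, _, _ => L.ofBIL (.atom p)
  | impl s t, α, β => L.fimpl (eval L s α β) (eval L t α β)
  | coimpl s t, α, β => L.fcoimpl (eval L s α β) (eval L t α β)

end BILSchema

/-- `signSat b P` says that `P` holds if the sign `b` is `+` (`true`), and
that `P` fails if the sign is `−` (`false`). -/
def signSat (b : Bool) (P : Prop) : Prop := if b then P else ¬ P

/-- Iterated conjunction, with `⋀ ∅ := ⊥ → ⊥`. -/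
def bigConj {A : Type} : List (BILForm A) → BILForm A
  | [] => .impl .bot .bot
  | φ :: l => .conj φ (bigConj l)

/-- Iterated disjunction, with `⋁ ∅ := ⊥`. -/
def bigDisj {A : Type} : List (BILForm A) → BILForm A
  | [] => .bot
  | φ :: l => .disj φ (bigDisj l)

/-- `N` realizes (over the signature `Θ`) every BIL-type of its submodel `M`. -/
def BILRealizesTypesIn {A Ω : Type} (Θ : Set A) (M N : SKModel A Ω) : Prop :=
  ∀ v ∈ M.dom, ∀ Γ Δ : Set (BILForm A),
    (BILSuccType Θ M v Γ Δ → ∃ u, N.rel v u ∧ BILSatTh N u Γ Δ) ∧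
    (BILPredType Θ M v Γ Δ → ∃ u, N.rel u v ∧ BILSatTh N u Γ Δ)

section BilProp1Aux

instance {A : Type} : Inhabited (BILForm A) := ⟨.bot⟩

lemma bigConj_sat' {A Ω : Type} (M : SKModel A Ω) (w : Ω) :
    ∀ l : List (BILForm A), BILSat M (bigConj l) w ↔ ∀ ψ ∈ l, BILSat M ψ w
  | [] => by simp [bigConj, BILSat]
  | φ :: l => by simp [bigConj, BILSat, bigConj_sat' M w l]

lemma bigDisj_sat' {A Ω : Type} (M : SKModel A Ω) (w : Ω) :
    ∀ l : List (BILForm A), BILSat M (bigDisj l) w ↔ ∃ ψ ∈ l, BILSat M ψ w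
  | [] => by simp [bigDisj, BILSat]
  | φ :: l => by simp [bigDisj, BILSat, bigDisj_sat' M w l]

lemma bigConj_letters' {A : Type} (Θ : Set A) :
    ∀ l : List (BILForm A), (∀ ψ ∈ l, ψ.letters ⊆ Θ) → (bigConj l).letters ⊆ Θ
  | [], _ => by simp [bigConj, BILForm.letters]
  | φ :: l, h => by
      simp only [bigConj, BILForm.letters]
      exact Set.union_subset (h φ (by simp))
        (bigConj_letters' Θ l fun ψ hψ => h ψ (by simp [hψ]))

lemma bigDisj_letters' {A : Type} (Θ : Set A) :
    ∀ l : List (BILForm A), (∀ ψ ∈ l, ψ.letters ⊆ Θ) → (bigDisj l).letters ⊆ Θ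
  | [], _ => by simp [bigDisj, BILForm.letters]
  | φ :: l, h => by
      simp only [bigDisj, BILForm.letters]
      exact Set.union_subset (h φ (by simp))
        (bigDisj_letters' Θ l fun ψ hψ => h ψ (by simp [hψ]))

lemma finite_subset_image_list' {α β : Type} [Inhabited β] (g : β → α) (S : Set β)
    (T : Set α) (hT : T.Finite) (hsub : T ⊆ g '' S) :
    ∃ l : List β, (∀ b ∈ l, b ∈ S) ∧ ∀ a ∈ T, ∃ b ∈ l, g b = a := by
  classical
  set f : α → β := fun a => if h : ∃ b ∈ S, g b = a then h.choose else default with hf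
  refine ⟨hT.toFinset.toList.map f, ?_, ?_⟩
  · intro b hb
    simp only [List.mem_map] at hb
    obtain ⟨a, ha, rfl⟩ := hb
    rw [Finset.mem_toList, Set.Finite.mem_toFinset] at ha
    have h : ∃ b ∈ S, g b = a := hsub ha
    simp only [hf, dif_pos h]
    exact h.choose_spec.1
  · intro a ha
    have h : ∃ b ∈ S, g b = a := hsub ha
    refine ⟨f a, List.mem_map_of_mem (f := f) ?_, ?_⟩
    · rw [Finset.mem_toList, Set.Finite.mem_toFinset]; exact ha
    · simp only [hf, dif_pos h]; exact h.choose_spec.2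

end BilProp1Aux

/-- Proposition 5.1. If `L` is a ★-compact abstract
bi-intuitionistic logic extending `BIL` which is not expressively equivalent
to `BIL`, then there are a signature `Θ`, a formula `φ ∈ L(Θ)` and pointed
`Θ`-models `(M₁,w₁)`, `(M₂,w₂)` with `Th⁺_BIL(M₁,w₁) ⊆ Th⁺_BIL(M₂,w₂)`,
while `φ` is true at `(M₁,w₁)` but false at `(M₂,w₂)`. -/
theorem bil_proposition1 (A : Type) (L : BILExtension A)
    (hcomp : L.toAbsLogic.StarCompact)
    (hnequiv : ¬ ∀ (Θ : Set A) (φ : L.F), φ ∈ L.In Θ →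
      ∃ ψ : BILForm A, ψ.letters ⊆ Θ ∧
        ∀ (Ω : Type) (M : SKModel A Ω) (w : Ω), w ∈ M.dom →
          (L.Sat M w φ ↔ BILSat M ψ w)) :
    ∃ (Θ : Set A) (φ : L.F), φ ∈ L.In Θ ∧
      ∃ (Ω₁ : Type) (M₁ : SKModel A Ω₁) (w₁ : Ω₁)
        (Ω₂ : Type) (M₂ : SKModel A Ω₂) (w₂ : Ω₂),
        w₁ ∈ M₁.dom ∧ w₂ ∈ M₂.dom ∧
        BILThPosSubset Θ M₁ w₁ M₂ w₂ ∧
        L.Sat M₁ w₁ φ ∧ ¬ L.Sat M₂ w₂ φ := by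
  classical
  by_contra hcon
  push_neg at hcon
  apply hnequiv
  intro Θ φ hφ
  by_cases hsatφ : ∃ (Ω : Type) (M : SKModel A Ω) (w : Ω), w ∈ M.dom ∧ L.Sat M w φ
  · -- φ is satisfiable
    set C : Set (BILForm A) :=
      {ψ | ψ.letters ⊆ Θ ∧ ∀ (Ω : Type) (M : SKModel A Ω) (w : Ω),
        w ∈ M.dom → L.Sat M w φ → BILSat M ψ w} with hCdef
    obtain ⟨Ω₀, M₀, w₀, hw₀, hsat₀⟩ := hsatφ
    -- Claim 1: any model of all of C satisfies φ
    have claim1 : ∀ (Ω₂ : Type) (M₂ : SKModel A Ω₂) (w₂ : Ω₂), w₂ ∈ M₂.dom →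
        (∀ ψ ∈ C, BILSat M₂ ψ w₂) → L.Sat M₂ w₂ φ := by
      intro Ω₂ M₂ w₂ hw₂ hC
      set S₂ : Set (BILForm A) := {ψ | ψ.letters ⊆ Θ ∧ ¬ BILSat M₂ ψ w₂} with hS₂
      set Δ : Set L.F := L.ofBIL '' S₂ with hΔ
      have hΓin : ({φ} : Set L.F) ⊆ L.In Θ := Set.singleton_subset_iff.mpr hφ
      have hΔin : Δ ⊆ L.In Θ := by
        rintro x ⟨ψ, hψ, rfl⟩; exact L.ofBIL_mem Θ ψ hψ.1
      have hfinite : ∀ Γ' ⊆ ({φ} : Set L.F), ∀ Δ' ⊆ Δ, Γ'.Finite → Δ'.Finite →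
          ∃ (Ω : Type) (M : SKModel A Ω) (w : Ω), w ∈ M.dom ∧
            L.toAbsLogic.SatTh M w Γ' Δ' := by
        intro Γ' hΓ' Δ' hΔ' _ hΔf
        by_contra hno
        push_neg at hno
        obtain ⟨l, hlS, hlcov⟩ := finite_subset_image_list' L.ofBIL S₂ Δ' hΔf hΔ'
        have hχC : bigDisj l ∈ C := by
          refine ⟨bigDisj_letters' Θ l fun ψ hψ => (hlS ψ hψ).1, ?_⟩
          intro Ω M w hw hsat
          have hnoth := hno Ω M w hw
          have hΓtrue : ∀ x ∈ Γ', L.Sat M w x := by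
            intro x hx
            have : x = φ := hΓ' hx
            rw [this]; exact hsat
          have hex : ∃ x ∈ Δ', L.Sat M w x := by
            by_contra hall
            push_neg at hall
            exact hnoth ⟨hΓtrue, hall⟩
          obtain ⟨x, hxΔ, hxsat⟩ := hex
          obtain ⟨ψ, hψl, hψeq⟩ := hlcov x hxΔ
          rw [bigDisj_sat']
          refine ⟨ψ, hψl, ?_⟩
          rw [← L.sat_ofBIL M w ψ, hψeq]; exact hxsat
        have := hC _ hχC
        rw [bigDisj_sat'] at this
        obtain ⟨ψ, hψl, hψsat⟩ := this
        exact (hlS ψ hψl).2 hψsat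
      obtain ⟨Ω₁, M₁, w₁, hw₁, hsat₁⟩ := hcomp Θ {φ} Δ hΓin hΔin hfinite
      have hpos : BILThPosSubset Θ M₁ w₁ M₂ w₂ := by
        intro ψ hlet hψ₁
        by_contra h2
        exact hsat₁.2 (L.ofBIL ψ) ⟨ψ, ⟨hlet, h2⟩, rfl⟩ ((L.sat_ofBIL M₁ w₁ ψ).mpr hψ₁)
      exact hcon Θ φ hφ Ω₁ M₁ w₁ Ω₂ M₂ w₂ hw₁ hw₂ hpos (hsat₁.1 φ rfl)
    -- Claim 2: the theory (ofBIL '' C, {φ}) is unsatisfiable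
    have hCin : L.ofBIL '' C ⊆ L.In Θ := by
      rintro x ⟨ψ, hψ, rfl⟩; exact L.ofBIL_mem Θ ψ hψ.1
    have hunsat : ¬ ∃ (Ω : Type) (M : SKModel A Ω) (w : Ω), w ∈ M.dom ∧
        L.toAbsLogic.SatTh M w (L.ofBIL '' C) {φ} := by
      rintro ⟨Ω, M, w, hw, h1, h2⟩
      exact h2 φ rfl (claim1 Ω M w hw fun ψ hψ =>
        (L.sat_ofBIL M w ψ).mp (h1 _ ⟨ψ, hψ, rfl⟩))
    have hfin : ¬ ∀ Γ' ⊆ L.ofBIL '' C, ∀ Δ' ⊆ ({φ} : Set L.F), Γ'.Finite → Δ'.Finite →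
        ∃ (Ω : Type) (M : SKModel A Ω) (w : Ω), w ∈ M.dom ∧
          L.toAbsLogic.SatTh M w Γ' Δ' := fun h =>
      hunsat (hcomp Θ _ _ hCin (Set.singleton_subset_iff.mpr hφ) h)
    push_neg at hfin
    obtain ⟨Γ', hΓ'sub, Δ', hΔ'sub, hΓ'f, hΔ'f, hno⟩ := hfin
    obtain ⟨l, hlC, hlcov⟩ := finite_subset_image_list' L.ofBIL C Γ' hΓ'f hΓ'sub
    refine ⟨bigConj l, bigConj_letters' Θ l fun ψ hψ => (hlC ψ hψ).1, ?_⟩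
    intro Ω M w hw
    constructor
    · intro hsat
      rw [bigConj_sat']
      exact fun ψ hψ => (hlC ψ hψ).2 Ω M w hw hsat
    · intro hsat
      rw [bigConj_sat'] at hsat
      have hΓtrue : ∀ x ∈ Γ', L.Sat M w x := by
        intro x hx
        obtain ⟨ψ, hψl, rfl⟩ := hlcov x hx
        exact (L.sat_ofBIL M w ψ).mpr (hsat ψ hψl)
      by_contra hnφ
      refine hno Ω M w hw ⟨hΓtrue, ?_⟩
      intro x hx
      have : x = φ := hΔ'sub hx
      rw [this]; exact hnφ
  · -- φ is unsatisfiable: equivalent to ⊥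
    refine ⟨.bot, by simp [BILForm.letters], ?_⟩
    intro Ω M w hw
    exact ⟨fun h => absurd ⟨Ω, M, w, hw, h⟩ hsatφ, fun h => h.elim⟩
end

section
/- Let L be an abstract bi-intuitionistic logic extending BIL which is preserved under bi-asimulations, let (M,w) be a pointed bi-unravelled Θ-model, and let (N,v) be a pointed Θ_M-model with Th_L(N,v) = Th_L([M],w). Then there exists an L-elementary embedding f of [M] into N with f(w) = v. -/
/-- Auxiliary recursion: build a function on reversed sequences. -/
noncomputable def buildF {Ω₀ Ω' : Type} (v : Ω') (step : Ω' → List Ω₀ → Ω₀ → Ω') :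
    List Ω₀ → Ω'
  | [] => v
  | [_] => v
  | x :: y :: rest => step (buildF v step (y :: rest)) (y :: rest).reverse x

/-- Lemma 5.2. Let `L` be an abstract bi-intuitionistic
logic extending `BIL` preserved under bi-asimulations, let `(M,[w₀])` be a
pointed bi-unravelled `Θ`-model (given in canonical form as the bi-unravelling
frame of `(M₀,w₀)`), and let `(N,v)` be a pointed `Θ_M`-model with
`Th_L(N,v) = Th_L([M],[w₀])`. Then there is an `L`-elementary embedding `f`
of `[M]` into `N` with `f([w₀]) = v`. -/
theorem bil_embedding_lemma (A : Type) (L : BILExtension A)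
    (hpres : L.toAbsLogic.Preserved)
    (Θ : Set A) (Ω₀ : Type) (M₀ : SKModel A Ω₀) (w₀ : Ω₀) (hw₀ : w₀ ∈ M₀.dom)
    (M : SKModel A (List Ω₀)) (hM : IsBiUnravelledForm M₀ w₀ M)
    (qp qm : List Ω₀ → A) (hfresh : FreshLetters Θ M.dom qp qm)
    (Mb : SKModel A (List Ω₀)) (hMb : IsBracket Θ qp qm M Mb)
    (Ω' : Type) (N : SKModel A Ω') (v : Ω') (hv : v ∈ N.dom)
    (hth : ∀ φ ∈ L.In (bracketSig Θ M.dom qp qm),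
      (L.Sat N v φ ↔ L.Sat Mb [w₀] φ)) :
    ∃ f : List Ω₀ → Ω',
      L.toAbsLogic.ElemEmbedding (bracketSig Θ M.dom qp qm) Mb N f ∧
      f [w₀] = v := by
    classical
  set Sg := bracketSig Θ M.dom qp qm with hSg
  have hdomM : M.dom = unravDom M₀ w₀ := hM.1
  have hdomMb : Mb.dom = unravDom M₀ w₀ := hMb.1.trans hM.1
  have hw0dom : [w₀] ∈ unravDom M₀ w₀ := by
    refine ⟨by simp, rfl, ?_, List.isChain_singleton _⟩
    intro z hz; simp only [List.mem_singleton] at hz; subst hz; exact hw₀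
  have satAtom : ∀ {Ωx : Type} (K : SKModel A Ωx) (u : Ωx) (p : A),
      L.Sat K u (L.ofBIL (.atom p)) ↔ u ∈ K.val p := fun K u p => L.sat_ofBIL K u (.atom p)
  have hmemAtom : ∀ β ∈ M.dom, L.ofBIL (BILForm.atom (qp β)) ∈ L.In Sg ∧
      L.ofBIL (BILForm.atom (qm β)) ∈ L.In Sg := by
    intro β hβ
    constructor <;> refine L.ofBIL_mem _ _ ?_ <;>
      rw [show (BILForm.atom _ : BILForm A).letters = {_} from rfl, Set.singleton_subset_iff, hSg]
    · exact Or.inl (Or.inr ⟨β, hβ, rfl⟩)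
    · exact Or.inr ⟨β, hβ, rfl⟩
  have uniq : ∀ β ∈ M.dom, ∀ γ ∈ M.dom, γ ∈ Mb.val (qp β) → γ ∉ Mb.val (qm β) → γ = β := by
    intro β hβ γ hγ h1 h2
    rw [hMb.2.2.2.1 β hβ] at h1
    rw [hMb.2.2.2.2 β hβ] at h2
    exact M.rel_antisymm (by by_contra h; exact h2 ⟨hγ, h⟩) h1
  have hself : ∀ β ∈ M.dom, β ∈ Mb.val (qp β) ∧ β ∉ Mb.val (qm β) := by
    intro β hβ
    rw [hMb.2.2.2.1 β hβ, hMb.2.2.2.2 β hβ]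
    exact ⟨M.rel_refl β hβ, by simp [M.rel_refl β hβ]⟩
  -- the key step lemma
  have key : ∀ (α : List Ω₀) (x : Ω₀), α ∈ unravDom M₀ w₀ → (α ++ [x]) ∈ unravDom M₀ w₀ →
      ∀ u, u ∈ N.dom → (∀ φ ∈ L.In Sg, (L.Sat N u φ ↔ L.Sat Mb α φ)) →
      ∃ u', u' ∈ N.dom ∧ (∀ φ ∈ L.In Sg, (L.Sat N u' φ ↔ L.Sat Mb (α ++ [x]) φ)) ∧
        ∀ y ∈ α.getLast?, (M₀.rel y x → N.rel u u') ∧ (M₀.rel x y ∧ y ≠ x → N.rel u' u) := by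
    intro α x hα hβ u hu hthu
    have hαM : α ∈ M.dom := by rw [hdomM]; exact hα
    have hβM : α ++ [x] ∈ M.dom := by rw [hdomM]; exact hβ
    obtain ⟨y, hy⟩ : ∃ y, α.getLast? = some y := by
      rw [← Option.isSome_iff_exists, List.getLast?_isSome]; exact hα.1
    have hchain := (List.isChain_append.mp hβ.2.2.2).2.2 y (Option.mem_def.mpr hy) x
      (Option.mem_def.mpr rfl)
    set P := L.ofBIL (BILForm.atom (qp (α ++ [x]))) with hPd
    set Q := L.ofBIL (BILForm.atom (qm (α ++ [x]))) with hQd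
    obtain ⟨hPmem, hQmem⟩ := hmemAtom (α ++ [x]) hβM
    have hPβ : L.Sat Mb (α ++ [x]) P := (satAtom Mb _ _).mpr (hself _ hβM).1
    have hQβ : ¬ L.Sat Mb (α ++ [x]) Q := fun h => (hself _ hβM).2 ((satAtom Mb _ _).mp h)
    have huniq : ∀ γ ∈ M.dom, L.Sat Mb γ P → ¬ L.Sat Mb γ Q → γ = α ++ [x] := by
      intro γ hγ h1 h2
      exact uniq _ hβM γ hγ ((satAtom Mb _ _).mp h1) (fun hm => h2 ((satAtom Mb _ _).mpr hm))
    rcases hchain.1 with hr | hr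
    · -- upward step : α ≺ α ++ [x]
      have hrelαβ : Mb.rel α (α ++ [x]) := by
        refine (hMb.2.1 _ _).mpr ((hM.2 _ _).mpr ⟨hα, hβ, Relation.ReflTransGen.single ?_⟩)
        exact ⟨hα, hβ, Or.inl ⟨x, y, hy, rfl, hr⟩⟩
      have h1 : ¬ L.Sat N u (L.fimpl P Q) := by
        intro h
        have h' := (hthu _ (L.mem_impl hPmem hQmem)).mp h
        rw [L.sat_impl] at h'
        exact hQβ (h' _ hrelαβ hPβ)
      rw [L.sat_impl] at h1
      push_neg at h1
      obtain ⟨u', hrel, hP', hQ'⟩ := h1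
      refine ⟨u', (N.rel_mem hrel).2, ?_, ?_⟩
      · intro φ hφ
        constructor
        · intro hs
          by_contra hns
          have hcl : L.Sat Mb α (L.fimpl (L.fconj P φ) Q) := by
            rw [L.sat_impl]
            intro γ hγrel hγc
            rw [L.sat_conj] at hγc
            by_contra hγQ
            have hγd : γ ∈ M.dom := by rw [← hMb.1]; exact (Mb.rel_mem hγrel).2
            have heq := huniq γ hγd hγc.1 hγQ
            rw [heq] at hγc
            exact hns hγc.2
          have hN := (hthu _ (L.mem_impl (L.mem_conj hPmem hφ) hQmem)).mpr hcl
          rw [L.sat_impl] at hN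
          exact hQ' (hN u' hrel ((L.sat_conj N u' P φ).mpr ⟨hP', hs⟩))
        · intro hs
          have hcl : L.Sat Mb α (L.fimpl P (L.fdisj Q φ)) := by
            rw [L.sat_impl]
            intro γ hγrel hγP
            rw [L.sat_disj]
            by_cases hγQ : L.Sat Mb γ Q
            · exact Or.inl hγQ
            · have hγd : γ ∈ M.dom := by rw [← hMb.1]; exact (Mb.rel_mem hγrel).2
              have heq := huniq γ hγd hγP hγQ
              rw [heq]
              exact Or.inr hs
          have hN := (hthu _ (L.mem_impl hPmem (L.mem_disj hQmem hφ))).mpr hcl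
          rw [L.sat_impl] at hN
          have hd := hN u' hrel hP'
          rw [L.sat_disj] at hd
          exact hd.resolve_left hQ'
      · intro y' hy'
        have hyy : y' = y := by
          rw [Option.mem_def, hy] at hy'
          exact (Option.some_inj.mp hy').symm
        subst hyy
        refine ⟨fun _ => hrel, fun hc => absurd (M₀.rel_antisymm hr hc.1) hc.2⟩
    · -- downward step : α ++ [x] ≺ α
      have hrelβα : Mb.rel (α ++ [x]) α := by
        refine (hMb.2.1 _ _).mpr ((hM.2 _ _).mpr ⟨hβ, hα, Relation.ReflTransGen.single ?_⟩)
        exact ⟨hβ, hα, Or.inr ⟨x, y, hy, rfl, hr⟩⟩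
      have h1 : L.Sat N u (L.fcoimpl P Q) := by
        refine (hthu _ (L.mem_coimpl hPmem hQmem)).mpr ?_
        rw [L.sat_coimpl]
        exact ⟨_, hrelβα, hPβ, hQβ⟩
      rw [L.sat_coimpl] at h1
      obtain ⟨u', hrel, hP', hQ'⟩ := h1
      refine ⟨u', (N.rel_mem hrel).1, ?_, ?_⟩
      · intro φ hφ
        constructor
        · intro hs
          by_contra hns
          have hcl : ¬ L.Sat Mb α (L.fcoimpl (L.fconj P φ) Q) := by
            rw [L.sat_coimpl]
            rintro ⟨γ, hγrel, hγc, hγQ⟩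
            rw [L.sat_conj] at hγc
            have hγd : γ ∈ M.dom := by rw [← hMb.1]; exact (Mb.rel_mem hγrel).1
            have heq := huniq γ hγd hγc.1 hγQ
            rw [heq] at hγc
            exact hns hγc.2
          have hN : ¬ L.Sat N u (L.fcoimpl (L.fconj P φ) Q) := fun h =>
            hcl ((hthu _ (L.mem_coimpl (L.mem_conj hPmem hφ) hQmem)).mp h)
          exact hN ((L.sat_coimpl N u _ _).mpr
            ⟨u', hrel, (L.sat_conj N u' P φ).mpr ⟨hP', hs⟩, hQ'⟩)
        · intro hs
          have hcl : ¬ L.Sat Mb α (L.fcoimpl P (L.fdisj Q φ)) := by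
            rw [L.sat_coimpl]
            rintro ⟨γ, hγrel, hγP, hγd2⟩
            have hγd : γ ∈ M.dom := by rw [← hMb.1]; exact (Mb.rel_mem hγrel).1
            by_cases hγQ : L.Sat Mb γ Q
            · exact hγd2 ((L.sat_disj Mb γ Q φ).mpr (Or.inl hγQ))
            · have heq := huniq γ hγd hγP hγQ
              refine hγd2 ((L.sat_disj Mb γ Q φ).mpr (Or.inr ?_))
              rw [heq]; exact hs
          have hN : ¬ L.Sat N u (L.fcoimpl P (L.fdisj Q φ)) := fun h =>
            hcl ((hthu _ (L.mem_coimpl hPmem (L.mem_disj hQmem hφ))).mp h)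
          by_contra hns
          refine hN ((L.sat_coimpl N u _ _).mpr ⟨u', hrel, hP', fun hd => ?_⟩)
          rw [L.sat_disj] at hd
          exact hd.elim hQ' hns
      · intro y' hy'
        have hyy : y' = y := by
          rw [Option.mem_def, hy] at hy'
          exact (Option.some_inj.mp hy').symm
        subst hyy
        exact ⟨fun hc => absurd (M₀.rel_antisymm hc hr) hchain.2, fun _ => hrel⟩
  -- the embedding, built by recursion along the tree
  set stepf : Ω' → List Ω₀ → Ω₀ → Ω' := fun u α x =>
    if h : ∃ u', u' ∈ N.dom ∧ (∀ φ ∈ L.In Sg, (L.Sat N u' φ ↔ L.Sat Mb (α ++ [x]) φ)) ∧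
        ∀ y ∈ α.getLast?, (M₀.rel y x → N.rel u u') ∧ (M₀.rel x y ∧ y ≠ x → N.rel u' u)
    then h.choose else u with hstepf
  set f : List Ω₀ → Ω' := fun l => buildF v stepf l.reverse with hfdef
  have hstep_spec : ∀ u (α : List Ω₀) (x : Ω₀),
      (∃ u', u' ∈ N.dom ∧ (∀ φ ∈ L.In Sg, (L.Sat N u' φ ↔ L.Sat Mb (α ++ [x]) φ)) ∧
        ∀ y ∈ α.getLast?, (M₀.rel y x → N.rel u u') ∧ (M₀.rel x y ∧ y ≠ x → N.rel u' u)) →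
      (stepf u α x) ∈ N.dom ∧
        (∀ φ ∈ L.In Sg, (L.Sat N (stepf u α x) φ ↔ L.Sat Mb (α ++ [x]) φ)) ∧
        ∀ y ∈ α.getLast?, (M₀.rel y x → N.rel u (stepf u α x)) ∧
          (M₀.rel x y ∧ y ≠ x → N.rel (stepf u α x) u) := by
    intro u α x h
    simp only [hstepf]
    rw [dif_pos h]
    exact h.choose_spec
  have hfv : f [w₀] = v := by simp only [hfdef]; simp [buildF]
  have hfsnoc : ∀ (α : List Ω₀) (x : Ω₀), α ≠ [] → f (α ++ [x]) = stepf (f α) α x := by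
    intro α x hne
    obtain ⟨y, rest, hyr⟩ := List.exists_cons_of_ne_nil (l := α.reverse) (by simpa using hne)
    simp only [hfdef]
    have h2 : (α ++ [x]).reverse = x :: y :: rest := by simp [hyr]
    rw [h2, hyr]
    simp only [buildF]
    rw [← hyr, List.reverse_reverse]
  have decomp : ∀ α, α ∈ unravDom M₀ w₀ →
      α = [w₀] ∨ ∃ γ x, α = γ ++ [x] ∧ γ ≠ [] ∧ γ ∈ unravDom M₀ w₀ := by
    intro α hα
    rcases List.eq_nil_or_concat α with rfl | ⟨γ, x, hγx⟩
    · exact absurd rfl hα.1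
    · rw [List.concat_eq_append] at hγx
      subst hγx
      by_cases hγ : γ = []
      · subst hγ
        left
        have hh := hα.2.1
        simp only [List.nil_append, List.head?_cons, Option.some_inj] at hh
        rw [hh]
        rfl
      · right
        refine ⟨γ, x, rfl, hγ, hγ, ?_, ?_, (List.isChain_append.mp hα.2.2.2).1⟩
        · rcases γ with _ | ⟨a, ta⟩
          · exact absurd rfl hγ
          · have hh := hα.2.1
            simp only [List.cons_append, List.head?_cons] at hh
            simpa using hh
        · intro z hz
          exact hα.2.2.1 z (by simp [hz])
  have main : ∀ n (α : List Ω₀), α.length ≤ n → α ∈ unravDom M₀ w₀ →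
      f α ∈ N.dom ∧ (∀ φ ∈ L.In Sg, (L.Sat N (f α) φ ↔ L.Sat Mb α φ)) := by
    intro n
    induction n with
    | zero =>
      intro α hlen hα
      exact absurd (List.length_eq_zero_iff.mp (Nat.le_zero.mp hlen)) hα.1
    | succ n ih =>
      intro α hlen hα
      rcases decomp α hα with rfl | ⟨γ, x, rfl, hne, hγ⟩
      · rw [hfv]; exact ⟨hv, hth⟩
      · have hlγ : γ.length ≤ n := by
          simp only [List.length_append, List.length_singleton] at hlen; omega
        obtain ⟨hd, htq⟩ := ih γ hlγ hγ
        have hsp := hstep_spec (f γ) γ x (key γ x hγ hα (f γ) hd htq)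
        rw [hfsnoc γ x hne]
        exact ⟨hsp.1, hsp.2.1⟩
  have inv : ∀ α ∈ unravDom M₀ w₀, f α ∈ N.dom ∧
      (∀ φ ∈ L.In Sg, (L.Sat N (f α) φ ↔ L.Sat Mb α φ)) :=
    fun α hα => main α.length α le_rfl hα
  have stepfact : ∀ (γ : List Ω₀) (x : Ω₀), γ ∈ unravDom M₀ w₀ →
      (γ ++ [x]) ∈ unravDom M₀ w₀ →
      ∀ y ∈ γ.getLast?, (M₀.rel y x → N.rel (f γ) (f (γ ++ [x]))) ∧
        (M₀.rel x y ∧ y ≠ x → N.rel (f (γ ++ [x])) (f γ)) := by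
    intro γ x hγ hγx
    have h := inv γ hγ
    have hsp := hstep_spec (f γ) γ x (key γ x hγ hγx (f γ) h.1 h.2)
    rw [hfsnoc γ x hγ.1]
    exact hsp.2.2
  have hrelstep : ∀ s t, unravStep M₀ w₀ s t → N.rel (f s) (f t) := by
    intro s t hst
    obtain ⟨hs, ht, hcase⟩ := hst
    rcases hcase with ⟨x, y, hylast, rfl, hr⟩ | ⟨x, y, hylast, rfl, hr⟩
    · exact ((stepfact s x hs ht) y (Option.mem_def.mpr hylast)).1 hr
    · have hchain := (List.isChain_append.mp hs.2.2.2).2.2 y (Option.mem_def.mpr hylast) x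
        (Option.mem_def.mpr rfl)
      exact ((stepfact t x ht hs) y (Option.mem_def.mpr hylast)).2 ⟨hr, hchain.2⟩
  have hrelMN : ∀ s t, Mb.rel s t → N.rel (f s) (f t) := by
    intro s t hrel
    obtain ⟨hs, ht, hrt⟩ := (hM.2 s t).mp ((hMb.2.1 s t).mp hrel)
    clear hrel ht
    induction hrt with
    | refl => exact N.rel_refl _ (inv s hs).1
    | tail h1 h2 ih => exact N.rel_trans ih (hrelstep _ _ h2)
  have hrelNM : ∀ s t, s ∈ unravDom M₀ w₀ → t ∈ unravDom M₀ w₀ →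
      N.rel (f s) (f t) → Mb.rel s t := by
    intro s t hs ht hrel
    have hsM : s ∈ M.dom := by rw [hdomM]; exact hs
    have hPmem := (hmemAtom s hsM).1
    have h1 : L.Sat N (f s) (L.ofBIL (BILForm.atom (qp s))) :=
      ((inv s hs).2 _ hPmem).mpr ((satAtom Mb _ _).mpr (hself s hsM).1)
    have h2 : f t ∈ N.val (qp s) := N.val_mono _ hrel ((satAtom N _ _).mp h1)
    have h3 : L.Sat Mb t (L.ofBIL (BILForm.atom (qp s))) :=
      ((inv t ht).2 _ hPmem).mp ((satAtom N _ _).mpr h2)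
    have h4 : t ∈ Mb.val (qp s) := (satAtom Mb _ _).mp h3
    rw [hMb.2.2.2.1 s hsM] at h4
    exact (hMb.2.1 s t).mpr h4
  refine ⟨f, ⟨?_, ?_, ?_, ?_⟩, hfv⟩
  · -- injectivity
    rw [show Mb.dom = unravDom M₀ w₀ from hdomMb]
    intro s hs t ht he
    have r1 : Mb.rel s t := hrelNM s t hs ht (by rw [he]; exact N.rel_refl _ (inv t ht).1)
    have r2 : Mb.rel t s := hrelNM t s ht hs (by rw [he]; exact N.rel_refl _ (inv t ht).1)
    exact Mb.rel_antisymm r1 r2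
  · intro u hu
    exact (inv u (by rw [← hdomMb]; exact hu)).1
  · intro s hs t ht
    rw [hdomMb] at hs ht
    exact ⟨hrelMN s t, hrelNM s t hs ht⟩
  · intro u hu φ hφ
    rw [hdomMb] at hu
    exact ((inv u hu).2 φ hφ).symm
end

section
/- Let L be an abstract bi-intuitionistic logic extending BIL which is preserved under bi-asimulations, is ★-compact, and has the TUP, and let (M,w) be a pointed bi-unravelled Θ-model. Then for every n > 0, every w̄ₙ = (w₁,…,wₙ) ∈ W^un_w and every 1 ≤ k ≤ n there exist binary formula schemas φ^k_{w̄ₙ}, ψ^k_{w̄ₙ}, θ^k_{w̄ₙ}, τ^k_{w̄ₙ} of BIL(Θ_M) and signs F(χ) ∈ {+,−} such that for every signature Σ ⊇ Θ_M, every Σ-expansion M' of [M], and all α, β ∈ L(Σ), writing w̄ₖ = (w₁,…,wₖ): (1) if F(φ^k_{w̄ₙ}) = + then M',w̄ₖ ⊨_L φ^k_{w̄ₙ}(α,β) iff M',w̄ₙ ⊭_L α→β, and if F(φ^k_{w̄ₙ}) = − then M',w̄ₖ ⊭_L φ^k_{w̄ₙ}(α,β) iff M',w̄ₙ ⊭_L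 α→β; (2) analogously, the condition for ψ^k_{w̄ₙ} holds iff M',w̄ₙ ⊨_L α≪β; (3) the condition for θ^k_{w̄ₙ} holds iff M',w̄ₙ ⊨_L α→β; (4) the condition for τ^k_{w̄ₙ} holds iff M',w̄ₙ ⊭_L α≪β. -/
/-! ### Auxiliary lemmas for Statement 4 -/

private lemma take_mem_unravDom {A Ω : Type} {M : SKModel A Ω} {w : Ω} {l : List Ω}
    (hl : l ∈ unravDom M w) {j : ℕ} (hj : 1 ≤ j) : l.take j ∈ unravDom M w := by
  obtain ⟨hne, hhd, hmem, hch⟩ := hl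
  refine ⟨?_, ?_, fun x hx => hmem x (List.mem_of_mem_take hx), hch.take j⟩
  · cases l with
    | nil => exact absurd rfl hne
    | cons a t =>
      cases j with
      | zero => omega
      | succ j => simp
  · cases l with
    | nil => exact absurd rfl hne
    | cons a t =>
      cases j with
      | zero => omega
      | succ j => simpa using hhd

private lemma take_step {A Ω : Type} {M₀ : SKModel A Ω} {w₀ : Ω} {l : List Ω}
    (hl : l ∈ unravDom M₀ w₀) {k : ℕ} (hk : 1 ≤ k) (hk' : k < l.length) :
    unravStep M₀ w₀ (l.take k) (l.take (k+1)) ∨ unravStep M₀ w₀ (l.take (k+1)) (l.take k) := by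
  have h1 : l.take k ∈ unravDom M₀ w₀ := take_mem_unravDom hl hk
  have h2 : l.take (k+1) ∈ unravDom M₀ w₀ := take_mem_unravDom hl (by omega)
  have hklen : k - 1 < l.length - 1 := by omega
  have hch : (M₀.rel (l.get ⟨k-1, by omega⟩) (l.get ⟨k-1+1, by omega⟩) ∨
      M₀.rel (l.get ⟨k-1+1, by omega⟩) (l.get ⟨k-1, by omega⟩)) ∧
      l.get ⟨k-1, by omega⟩ ≠ l.get ⟨k-1+1, by omega⟩ :=
    List.isChain_iff_getElem.mp hl.2.2.2 (k-1) (by omega)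
  have hb : l.get ⟨k-1+1, by omega⟩ = l.get ⟨k, hk'⟩ := by
    have heq : (⟨k-1+1, by omega⟩ : Fin l.length) = ⟨k, hk'⟩ := by
      apply Fin.ext
      simp only [Fin.val_mk]
      omega
    rw [heq]
  rw [hb] at hch
  have hlast : (l.take k).getLast? = some (l.get ⟨k-1, by omega⟩) := by
    rw [List.getLast?_eq_getElem?]
    have hlen : (l.take k).length = k := by
      rw [List.length_take]; omega
    rw [hlen, List.getElem?_take, if_pos (by omega),
      List.getElem?_eq_getElem (show k-1 < l.length by omega)]
    rfl
  have happ : l.take (k+1) = l.take k ++ [l.get ⟨k, hk'⟩] := by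
    rw [List.take_succ, List.getElem?_eq_getElem hk']
    rfl
  rcases hch.1 with h | h
  · exact Or.inl ⟨h1, h2, Or.inl ⟨_, _, hlast, happ, h⟩⟩
  · exact Or.inr ⟨h2, h1, Or.inr ⟨_, _, hlast, happ, h⟩⟩

/-- The forward-transfer schema `q⁺_c → (s → q⁻_c)`. -/
private def fwdS {A : Type} (p q : A) (s : BILSchema A) : BILSchema A :=
  .impl (.atom p) (.impl s (.atom q))

/-- The backward-transfer schema `q⁺_c ≪ (s → q⁻_c)`. -/
private def bwdS {A : Type} (p q : A) (s : BILSchema A) : BILSchema A :=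
  .coimpl (.atom p) (.impl s (.atom q))

private lemma fwd_iff {A : Type} (L : BILExtension A) {Ω : Type}
    (M' : SKModel A Ω) {qpc qmc : A} {c : Ω}
    (hqp : M'.val qpc = {β | M'.rel c β})
    (hqm : M'.val qmc = {β | β ∈ M'.dom ∧ ¬ M'.rel β c})
    (hc : c ∈ M'.dom) (f : L.F) {w : Ω} (hw : M'.rel w c) :
    ¬ L.Sat M' w (L.fimpl (L.ofBIL (.atom qpc)) (L.fimpl f (L.ofBIL (.atom qmc)))) ↔
      L.Sat M' c f := by
  rw [L.sat_impl]
  constructor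
  · intro h
    push_neg at h
    obtain ⟨v, hwv, hvqp, hv⟩ := h
    rw [L.sat_impl] at hv
    push_neg at hv
    obtain ⟨u, hvu, huf, huqm⟩ := hv
    rw [L.sat_ofBIL] at hvqp huqm
    simp only [BILSat, hqp, Set.mem_setOf_eq] at hvqp
    simp only [BILSat, hqm, Set.mem_setOf_eq] at huqm
    have hu : u ∈ M'.dom := (M'.rel_mem hvu).2
    have huc : M'.rel u c := by
      by_contra hcon
      exact huqm ⟨hu, hcon⟩
    have hcu : M'.rel c u := M'.rel_trans hvqp hvu
    have : u = c := M'.rel_antisymm huc hcu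
    rwa [this] at huf
  · intro h hall
    have h1 := hall c hw (by
      rw [L.sat_ofBIL]
      simp only [BILSat, hqp, Set.mem_setOf_eq]
      exact M'.rel_refl c hc)
    rw [L.sat_impl] at h1
    have h2 := h1 c (M'.rel_refl c hc) h
    rw [L.sat_ofBIL] at h2
    simp only [BILSat, hqm, Set.mem_setOf_eq] at h2
    exact h2.2 (M'.rel_refl c hc)

private lemma bwd_iff {A : Type} (L : BILExtension A) {Ω : Type}
    (M' : SKModel A Ω) {qpc qmc : A} {c : Ω}
    (hqp : M'.val qpc = {β | M'.rel c β})
    (hqm : M'.val qmc = {β | β ∈ M'.dom ∧ ¬ M'.rel β c})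
    (hc : c ∈ M'.dom) (f : L.F) {w : Ω} (hw : M'.rel c w) :
    L.Sat M' w (L.fcoimpl (L.ofBIL (.atom qpc)) (L.fimpl f (L.ofBIL (.atom qmc)))) ↔
      L.Sat M' c f := by
  rw [L.sat_coimpl]
  constructor
  · rintro ⟨v, hvw, hvqp, hv⟩
    rw [L.sat_impl] at hv
    push_neg at hv
    obtain ⟨u, hvu, huf, huqm⟩ := hv
    rw [L.sat_ofBIL] at hvqp huqm
    simp only [BILSat, hqp, Set.mem_setOf_eq] at hvqp
    simp only [BILSat, hqm, Set.mem_setOf_eq] at huqm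
    have hu : u ∈ M'.dom := (M'.rel_mem hvu).2
    have huc : M'.rel u c := by
      by_contra hcon
      exact huqm ⟨hu, hcon⟩
    have hcu : M'.rel c u := M'.rel_trans hvqp hvu
    have : u = c := M'.rel_antisymm huc hcu
    rwa [this] at huf
  · intro h
    refine ⟨c, hw, ?_, ?_⟩
    · rw [L.sat_ofBIL]
      simp only [BILSat, hqp, Set.mem_setOf_eq]
      exact M'.rel_refl c hc
    · rw [L.sat_impl]
      push_neg
      refine ⟨c, M'.rel_refl c hc, h, ?_⟩
      rw [L.sat_ofBIL]
      simp only [BILSat, hqm, Set.mem_setOf_eq]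
      intro hcon
      exact hcon.2 (M'.rel_refl c hc)

private lemma fwd_transfer {A : Type} (L : BILExtension A) {Ω : Type}
    (M' : SKModel A Ω) {qpc qmc : A} {c : Ω}
    (hqp : M'.val qpc = {β | M'.rel c β})
    (hqm : M'.val qmc = {β | β ∈ M'.dom ∧ ¬ M'.rel β c})
    (hc : c ∈ M'.dom) {w : Ω} (hw : M'.rel w c) (b : Bool) (f : L.F) {T : Prop}
    (h : signSat b (L.Sat M' c f) ↔ T) :
    signSat (!b) (L.Sat M' w
      (L.fimpl (L.ofBIL (.atom qpc)) (L.fimpl f (L.ofBIL (.atom qmc))))) ↔ T := by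
  have key := fwd_iff L M' hqp hqm hc f hw
  cases b
  · simp only [signSat, Bool.not_false, if_true, if_false] at h ⊢
    exact ((not_iff_comm.mp key).symm).trans h
  · simp only [signSat, Bool.not_true, if_true, if_false] at h ⊢
    exact key.trans h

private lemma bwd_transfer {A : Type} (L : BILExtension A) {Ω : Type}
    (M' : SKModel A Ω) {qpc qmc : A} {c : Ω}
    (hqp : M'.val qpc = {β | M'.rel c β})
    (hqm : M'.val qmc = {β | β ∈ M'.dom ∧ ¬ M'.rel β c})
    (hc : c ∈ M'.dom) {w : Ω} (hw : M'.rel c w) (b : Bool) (f : L.F) {T : Prop}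
    (h : signSat b (L.Sat M' c f) ↔ T) :
    signSat b (L.Sat M' w
      (L.fcoimpl (L.ofBIL (.atom qpc)) (L.fimpl f (L.ofBIL (.atom qmc))))) ↔ T := by
  have key := bwd_iff L M' hqp hqm hc f hw
  cases b
  · simp only [signSat, if_true, if_false] at h ⊢
    exact (not_congr key).trans h
  · simp only [signSat, if_true, if_false] at h ⊢
    exact key.trans h

/-- Lemma 5.4. Let `L` extend `BIL`, be preserved under
bi-asimulations, ★-compact and have the TUP, and let `(M,[w₀])` be a pointed
bi-unravelled `Θ`-model (in canonical form, over `(M₀,w₀)`). Then for every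
`w̄ₙ ∈ W^un_w` (a sequence `wb ∈ M.dom`, `n = wb.length > 0`) and every
`1 ≤ k ≤ n` there are binary formula schemas `φ, ψ, θ, τ` of `BIL(Θ_M)` and
signs such that, for every signature `Sg ⊇ Θ_M`, every `Sg`-expansion `M'` of
`[M]` and all `α, β ∈ L(Sg)`, the four *biconditional* properties hold at
`w̄ₖ = wb.take k` and `w̄ₙ = wb`. -/
theorem bil_schema_bracket (A : Type) (L : BILExtension A)
    (hpres : L.toAbsLogic.Preserved)
    (hcomp : L.toAbsLogic.StarCompact)
    (htup : L.toAbsLogic.HasTUP)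
    (Θ : Set A) (Ω₀ : Type) (M₀ : SKModel A Ω₀) (w₀ : Ω₀) (hw₀ : w₀ ∈ M₀.dom)
    (M : SKModel A (List Ω₀)) (hM : IsBiUnravelledForm M₀ w₀ M)
    (qp qm : List Ω₀ → A) (hfresh : FreshLetters Θ M.dom qp qm)
    (Mb : SKModel A (List Ω₀)) (hMb : IsBracket Θ qp qm M Mb) :
    ∀ wb ∈ M.dom, ∀ k : ℕ, 1 ≤ k → k ≤ wb.length →
      ∃ (φs ψs θs τs : BILSchema A) (sφ sψ sθ sτ : Bool),
        φs.letters ⊆ bracketSig Θ M.dom qp qm ∧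
        ψs.letters ⊆ bracketSig Θ M.dom qp qm ∧
        θs.letters ⊆ bracketSig Θ M.dom qp qm ∧
        τs.letters ⊆ bracketSig Θ M.dom qp qm ∧
        ∀ (Sg : Set A), bracketSig Θ M.dom qp qm ⊆ Sg →
          ∀ M' : SKModel A (List Ω₀), IsExpansion (bracketSig Θ M.dom qp qm) Mb M' →
            ∀ α ∈ L.In Sg, ∀ β ∈ L.In Sg,
              (signSat sφ (L.Sat M' (wb.take k) (φs.eval L α β)) ↔
                ¬ L.Sat M' wb (L.fimpl α β)) ∧
              (signSat sψ (L.Sat M' (wb.take k) (ψs.eval L α β)) ↔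
                L.Sat M' wb (L.fcoimpl α β)) ∧
              (signSat sθ (L.Sat M' (wb.take k) (θs.eval L α β)) ↔
                L.Sat M' wb (L.fimpl α β)) ∧
              (signSat sτ (L.Sat M' (wb.take k) (τs.eval L α β)) ↔
                ¬ L.Sat M' wb (L.fcoimpl α β)) := by
  intro wb hwb
  have hdom := hM.1
  have hrelM := hM.2
  have hwb' : wb ∈ unravDom M₀ w₀ := by rw [← hdom]; exact hwb
  suffices H : ∀ d k, 1 ≤ k → k + d = wb.length →
      ∃ (φs ψs θs τs : BILSchema A) (sφ sψ sθ sτ : Bool),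
        φs.letters ⊆ bracketSig Θ M.dom qp qm ∧
        ψs.letters ⊆ bracketSig Θ M.dom qp qm ∧
        θs.letters ⊆ bracketSig Θ M.dom qp qm ∧
        τs.letters ⊆ bracketSig Θ M.dom qp qm ∧
        ∀ (Sg : Set A), bracketSig Θ M.dom qp qm ⊆ Sg →
          ∀ M' : SKModel A (List Ω₀), IsExpansion (bracketSig Θ M.dom qp qm) Mb M' →
            ∀ α ∈ L.In Sg, ∀ β ∈ L.In Sg,
              (signSat sφ (L.Sat M' (wb.take k) (φs.eval L α β)) ↔
                ¬ L.Sat M' wb (L.fimpl α β)) ∧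
              (signSat sψ (L.Sat M' (wb.take k) (ψs.eval L α β)) ↔
                L.Sat M' wb (L.fcoimpl α β)) ∧
              (signSat sθ (L.Sat M' (wb.take k) (θs.eval L α β)) ↔
                L.Sat M' wb (L.fimpl α β)) ∧
              (signSat sτ (L.Sat M' (wb.take k) (τs.eval L α β)) ↔
                ¬ L.Sat M' wb (L.fcoimpl α β)) by
    intro k hk1 hk2
    exact H (wb.length - k) k hk1 (by omega)
  intro d
  induction d with
  | zero =>
    intro k hk1 hk2
    have hk : k = wb.length := by omega
    subst hk
    refine ⟨.impl .v1 .v2, .coimpl .v1 .v2, .impl .v1 .v2, .coimpl .v1 .v2,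
      false, true, true, false, ?_, ?_, ?_, ?_, ?_⟩
    · simp [BILSchema.letters]
    · simp [BILSchema.letters]
    · simp [BILSchema.letters]
    · simp [BILSchema.letters]
    · intro Sg hSg M' hexp α hα β hβ
      simp only [List.take_length, BILSchema.eval, signSat, if_true, if_false]
      tauto
  | succ d ih =>
    intro k hk1 hk2
    obtain ⟨φs, ψs, θs, τs, sφ, sψ, sθ, sτ, hφl, hψl, hθl, hτl, hmain⟩ :=
      ih (k+1) (by omega) (by omega)
    set c := wb.take (k+1) with hcdef
    have hcu : c ∈ unravDom M₀ w₀ := take_mem_unravDom hwb' (by omega)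
    have hku : wb.take k ∈ unravDom M₀ w₀ := take_mem_unravDom hwb' hk1
    have hcdom : c ∈ M.dom := by rw [hdom]; exact hcu
    have hstep := take_step hwb' hk1 (show k < wb.length by omega)
    have hadj : M.rel (wb.take k) c ∨ M.rel c (wb.take k) := by
      rcases hstep with h | h
      · exact Or.inl ((hrelM _ _).mpr ⟨hku, hcu, Relation.ReflTransGen.single h⟩)
      · exact Or.inr ((hrelM _ _).mpr ⟨hcu, hku, Relation.ReflTransGen.single h⟩)
    have hqpmem : qp c ∈ bracketSig Θ M.dom qp qm := Or.inl (Or.inr ⟨c, hcdom, rfl⟩)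
    have hqmmem : qm c ∈ bracketSig Θ M.dom qp qm := Or.inr ⟨c, hcdom, rfl⟩
    have hletters : ∀ s : BILSchema A, s.letters ⊆ bracketSig Θ M.dom qp qm →
        ∀ t ∈ ({fwdS (qp c) (qm c) s, bwdS (qp c) (qm c) s} : Set (BILSchema A)),
          BILSchema.letters t ⊆ bracketSig Θ M.dom qp qm := by
      intro s hs t ht
      rcases ht with rfl | rfl <;>
      · simp only [fwdS, bwdS, BILSchema.letters]
        exact Set.union_subset (Set.singleton_subset_iff.mpr hqpmem)
          (Set.union_subset hs (Set.singleton_subset_iff.mpr hqmmem))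
    have hMfacts : ∀ M' : SKModel A (List Ω₀),
        IsExpansion (bracketSig Θ M.dom qp qm) Mb M' →
        (∀ u v, M'.rel u v ↔ M.rel u v) ∧ M'.dom = M.dom ∧
        M'.val (qp c) = {β | M'.rel c β} ∧
        M'.val (qm c) = {β | β ∈ M'.dom ∧ ¬ M'.rel β c} := by
      intro M' hexp
      have hrel' : ∀ u v, M'.rel u v ↔ M.rel u v :=
        fun u v => (hexp.2.1 u v).trans (hMb.2.1 u v)
      have hdom' : M'.dom = M.dom := hexp.1.trans hMb.1
      refine ⟨hrel', hdom', ?_, ?_⟩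
      · rw [hexp.2.2 _ hqpmem, hMb.2.2.2.1 c hcdom]
        ext x
        simp [hrel']
      · rw [hexp.2.2 _ hqmmem, hMb.2.2.2.2 c hcdom]
        ext x
        simp [hrel', hdom']
    rcases hadj with hfwd | hbwd
    · refine ⟨fwdS (qp c) (qm c) φs, fwdS (qp c) (qm c) ψs,
        fwdS (qp c) (qm c) θs, fwdS (qp c) (qm c) τs, !sφ, !sψ, !sθ, !sτ,
        hletters φs hφl _ (Or.inl rfl), hletters ψs hψl _ (Or.inl rfl),
        hletters θs hθl _ (Or.inl rfl), hletters τs hτl _ (Or.inl rfl), ?_⟩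
      intro Sg hSg M' hexp α hα β hβ
      obtain ⟨h1, h2, h3, h4⟩ := hmain Sg hSg M' hexp α hα β hβ
      obtain ⟨hrel', hdom', hqp', hqm'⟩ := hMfacts M' hexp
      have hc' : c ∈ M'.dom := by rw [hdom']; exact hcdom
      have hwc : M'.rel (wb.take k) c := (hrel' _ _).mpr hfwd
      exact ⟨fwd_transfer L M' hqp' hqm' hc' hwc sφ _ h1,
        fwd_transfer L M' hqp' hqm' hc' hwc sψ _ h2,
        fwd_transfer L M' hqp' hqm' hc' hwc sθ _ h3,
        fwd_transfer L M' hqp' hqm' hc' hwc sτ _ h4⟩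
    · refine ⟨bwdS (qp c) (qm c) φs, bwdS (qp c) (qm c) ψs,
        bwdS (qp c) (qm c) θs, bwdS (qp c) (qm c) τs, sφ, sψ, sθ, sτ,
        hletters φs hφl _ (Or.inr rfl), hletters ψs hψl _ (Or.inr rfl),
        hletters θs hθl _ (Or.inr rfl), hletters τs hτl _ (Or.inr rfl), ?_⟩
      intro Sg hSg M' hexp α hα β hβ
      obtain ⟨h1, h2, h3, h4⟩ := hmain Sg hSg M' hexp α hα β hβ
      obtain ⟨hrel', hdom', hqp', hqm'⟩ := hMfacts M' hexp
      have hc' : c ∈ M'.dom := by rw [hdom']; exact hcdom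
      have hwc : M'.rel c (wb.take k) := (hrel' _ _).mpr hbwd
      exact ⟨bwd_transfer L M' hqp' hqm' hc' hwc sφ _ h1,
        bwd_transfer L M' hqp' hqm' hc' hwc sψ _ h2,
        bwd_transfer L M' hqp' hqm' hc' hwc sθ _ h3,
        bwd_transfer L M' hqp' hqm' hc' hwc sτ _ h4⟩
end

section
/- If L is an abstract bi-intuitionistic logic preserved under bi-asimulations, then every L-formula is monotone along the accessibility relation: for every pointed Θ-model (M,w), every v ∈ W with w ≺ v, and every φ ∈ L(Θ), if M,w ⊨_L φ then M,v ⊨_L φ. -/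
/-- Lemma 4.3, monotonicity. If an abstract
bi-intuitionistic logic `L` is preserved under bi-asimulations, then every
`L`-formula is monotone along the accessibility relation. -/
theorem bil_monotonicity (A : Type) (L : AbsLogic A) (hpres : L.Preserved)
    (Θ : Set A) (Ω : Type) (M : SKModel A Ω) (w v : Ω) (hw : w ∈ M.dom)
    (hwv : M.rel w v) (φ : L.F) (hφ : φ ∈ L.In Θ) :
    L.Sat M w φ → L.Sat M v φ := by
  intro hsat
  have hv : v ∈ M.dom := (M.rel_mem hwv).2
  have hasim : IsBiAsim Θ M M w v M.rel (fun a b => a = b ∧ a ∈ M.dom) := {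
    memR := fun h => M.rel_mem h
    memS := fun h => ⟨h.2, h.1 ▸ h.2⟩
    elem := hwv
    atomR := fun p _ {x y} h hx => M.val_mono p h hx
    atomS := fun p _ {x y} h hx => h.1 ▸ hx
    backR := fun {x y t} h h2 =>
      ⟨t, M.rel_trans h h2, ⟨rfl, (M.rel_mem h2).2⟩, M.rel_refl t (M.rel_mem h2).2⟩
    backS := fun {x y t} h h2 => by
      obtain ⟨rfl, hx⟩ := h
      exact ⟨t, h2, M.rel_refl t (M.rel_mem h2).2, rfl, (M.rel_mem h2).2⟩
    forthR := fun {x y u} h h2 =>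
      ⟨u, M.rel_trans h2 h, ⟨rfl, (M.rel_mem h2).1⟩, M.rel_refl u (M.rel_mem h2).1⟩
    forthS := fun {x y u} h h2 => by
      obtain ⟨rfl, hx⟩ := h
      exact ⟨u, h2, M.rel_refl u (M.rel_mem h2).1, rfl, (M.rel_mem h2).1⟩ }
  exact hpres Θ Ω Ω M M w v _ _ hasim φ hφ hsat
end
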